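/- For λ on the unit circle, the ideal {f ∈ A(𝔻) : f(λ) = 0} in the disk algebra has a bounded approximate identity: there is a net (f_ι) in the ideal, uniformly bounded in norm, with f_ι g → g in norm for every g in the ideal. -/

import Mathlib

open Metric

private lemma stmt13_aux1 (u : ℂ) (hu : 0 ≤ u.re) : ‖u‖ ≤ ‖1 + u‖ := by
  have h1 : ‖u‖ ^ 2 = u.re ^ 2 + u.im ^ 2 := by
    rw [Complex.sq_norm, Complex.normSq_apply]; ring
  have h2 : ‖1 + u‖ ^ 2 = (1 + u.re) ^ 2 + u.im ^ 2 := by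
    rw [Complex.sq_norm, Complex.normSq_apply]
    simp [Complex.add_re, Complex.add_im]
    ring
  nlinarith [norm_nonneg u, norm_nonneg (1 + u)]

private lemma stmt13_re_le (lam : ℂ) (hlam : ‖lam‖ = 1) (z : ℂ)
    (hz : z ∈ closedBall (0 : ℂ) 1) : ((starRingEnd ℂ) lam * z).re ≤ 1 := by
  have h1 : ((starRingEnd ℂ) lam * z).re ≤ ‖(starRingEnd ℂ) lam * z‖ :=
    Complex.re_le_norm _
  have h2 : ‖(starRingEnd ℂ) lam * z‖ ≤ 1 := by
    rw [norm_mul, RCLike.norm_conj, hlam, one_mul]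
    simpa [dist_eq_norm] using hz
  linarith

/-- for `|λ| = 1`, the ideal `{f ∈ A(𝔻) : f(λ) = 0}` of the disk
algebra has a bounded approximate identity. -/
theorem stmt13 (lam : ℂ) (hlam : ‖lam‖ = 1) :
    ∃ (ι : Type) (l : Filter ι) (e : ι → ℂ → ℂ), l.NeBot ∧
      (∀ i, ContinuousOn (e i) (closedBall (0 : ℂ) 1) ∧
        DifferentiableOn ℂ (e i) (ball (0 : ℂ) 1) ∧ e i lam = 0) ∧
      (∃ C : ℝ, ∀ i, ∀ z ∈ closedBall (0 : ℂ) 1, ‖e i z‖ ≤ C) ∧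
      (∀ g : ℂ → ℂ, ContinuousOn g (closedBall (0 : ℂ) 1) →
        DifferentiableOn ℂ g (ball (0 : ℂ) 1) → g lam = 0 →
        TendstoUniformlyOn (fun i z => e i z * g z) g l (closedBall (0 : ℂ) 1)) := by
  set w : ℂ → ℂ := fun z => 1 - (starRingEnd ℂ) lam * z with hw
  -- basic facts about w
  have hwre : ∀ z ∈ closedBall (0 : ℂ) 1, 0 ≤ (w z).re := by
    intro z hz
    have h := stmt13_re_le lam hlam z hz
    simp only [hw, Complex.sub_re, Complex.one_re]
    linarith
  have hwlam : w lam = 0 := by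
    have : (starRingEnd ℂ) lam * lam = 1 := by
      rw [mul_comm, Complex.mul_conj]
      simp [Complex.normSq_eq_norm_sq, hlam]
    simp [hw, this]
  -- denominator facts
  have hDre : ∀ (n : ℕ), ∀ z ∈ closedBall (0 : ℂ) 1, (1 : ℝ) ≤ (1 + (n : ℂ) * w z).re := by
    intro n z hz
    have h1 := hwre z hz
    have : ((n : ℂ) * w z).re = (n : ℝ) * (w z).re := by
      simp [Complex.mul_re]
    simp [Complex.add_re, this]
    positivity
  have hDne : ∀ (n : ℕ), ∀ z ∈ closedBall (0 : ℂ) 1, (1 + (n : ℂ) * w z) ≠ 0 := by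
    intro n z hz h0
    have := hDre n z hz
    rw [h0] at this
    simp at this
    linarith
  have hDnorm1 : ∀ (n : ℕ), ∀ z ∈ closedBall (0 : ℂ) 1, (1 : ℝ) ≤ ‖1 + (n : ℂ) * w z‖ := by
    intro n z hz
    calc (1 : ℝ) ≤ (1 + (n : ℂ) * w z).re := hDre n z hz
    _ ≤ ‖1 + (n : ℂ) * w z‖ := Complex.re_le_norm _
  have hnwre : ∀ (n : ℕ), ∀ z ∈ closedBall (0 : ℂ) 1, 0 ≤ ((n : ℂ) * w z).re := by
    intro n z hz
    have h1 := hwre z hz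
    have : ((n : ℂ) * w z).re = (n : ℝ) * (w z).re := by simp [Complex.mul_re]
    rw [this]; positivity
  refine ⟨ℕ, Filter.atTop, fun n z => ((n : ℂ) * w z) / (1 + (n : ℂ) * w z),
    Filter.atTop_neBot, ?_, ⟨1, ?_⟩, ?_⟩
  · -- continuity / differentiability / vanishing at lam
    intro n
    have hlammem : lam ∈ closedBall (0 : ℂ) 1 := by
      simp [mem_closedBall, dist_eq_norm, hlam]
    refine ⟨?_, ?_, ?_⟩
    · apply ContinuousOn.div
      · fun_prop
      · fun_prop
      · exact hDne n
    · apply DifferentiableOn.div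
      · fun_prop
      · fun_prop
      · intro z hz
        exact hDne n z (ball_subset_closedBall hz)
    · simp [hwlam]
  · -- uniform bound
    intro n z hz
    rw [norm_div]
    have h1 := hDnorm1 n z hz
    have h2 : ‖(n : ℂ) * w z‖ ≤ ‖1 + (n : ℂ) * w z‖ := stmt13_aux1 _ (hnwre n z hz)
    rw [div_le_one (by linarith)]
    exact h2
  · -- approximate identity property
    intro g hg hgd hg0
    rw [Metric.tendstoUniformlyOn_iff]
    intro ε hε
    obtain ⟨M, hM⟩ : ∃ M, ∀ z ∈ closedBall (0 : ℂ) 1, ‖g z‖ ≤ M :=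
      (isCompact_closedBall (0 : ℂ) 1).exists_bound_of_continuousOn hg
    set M' : ℝ := max M 0 with hM'
    have hM'nonneg : 0 ≤ M' := le_max_right _ _
    have hM'g : ∀ z ∈ closedBall (0 : ℂ) 1, ‖g z‖ ≤ M' := fun z hz =>
      (hM z hz).trans (le_max_left _ _)
    have hlammem : lam ∈ closedBall (0 : ℂ) 1 := by
      simp [mem_closedBall, dist_eq_norm, hlam]
    obtain ⟨δ, hδpos, hδ⟩ : ∃ δ > 0, ∀ z ∈ closedBall (0 : ℂ) 1,
        dist z lam < δ → ‖g z‖ < ε / 2 := by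
      have hc := hg lam hlammem
      rw [Metric.continuousWithinAt_iff] at hc
      obtain ⟨δ, hδpos, h⟩ := hc (ε / 2) (by linarith)
      refine ⟨δ, hδpos, fun z hz hzd => ?_⟩
      have := h hz hzd
      simpa [hg0, dist_eq_norm] using this
    -- eventually M'/(n*δ) < ε
    have htend : Filter.Tendsto (fun n : ℕ => M' / δ * (1 / (n : ℝ))) Filter.atTop
        (nhds 0) := by
      have := tendsto_one_div_atTop_nhds_zero_nat (𝕜 := ℝ)
      simpa using (this.const_mul (M' / δ))
    have hev : ∀ᶠ n : ℕ in Filter.atTop, M' / δ * (1 / (n : ℝ)) < ε :=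
      htend.eventually (gt_mem_nhds hε)
    filter_upwards [hev, Filter.eventually_ge_atTop 1] with n hn hn1
    intro z hz
    have hDz := hDne n z hz
    have key : g z - ((n : ℂ) * w z) / (1 + (n : ℂ) * w z) * g z
        = g z / (1 + (n : ℂ) * w z) := by
      field_simp
      ring
    rw [dist_eq_norm, key, norm_div]
    by_cases hcase : dist z lam < δ
    · have h1 := hδ z hz hcase
      have h2 := hDnorm1 n z hz
      calc ‖g z‖ / ‖1 + (n : ℂ) * w z‖ ≤ ‖g z‖ := div_le_self (norm_nonneg _) h2
      _ < ε / 2 := h1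
      _ < ε := by linarith
    · push_neg at hcase
      have hwznorm : δ ≤ ‖w z‖ := by
        have : w z = (starRingEnd ℂ) lam * (lam - z) := by
          rw [hw]
          have : (starRingEnd ℂ) lam * lam = 1 := by
            rw [mul_comm, Complex.mul_conj]
            simp [Complex.normSq_eq_norm_sq, hlam]
          simp [mul_sub, this]
        rw [this, norm_mul, RCLike.norm_conj, hlam, one_mul]
        rw [dist_eq_norm] at hcase
        calc δ ≤ ‖z - lam‖ := hcase
        _ = ‖lam - z‖ := by rw [norm_sub_rev]
      have hDlow : (n : ℝ) * δ ≤ ‖1 + (n : ℂ) * w z‖ := by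
        have h2 : ‖(n : ℂ) * w z‖ ≤ ‖1 + (n : ℂ) * w z‖ := stmt13_aux1 _ (hnwre n z hz)
        have h3 : (n : ℝ) * δ ≤ ‖(n : ℂ) * w z‖ := by
          rw [norm_mul]
          have : ‖(n : ℂ)‖ = (n : ℝ) := by simp
          rw [this]
          exact mul_le_mul_of_nonneg_left hwznorm (Nat.cast_nonneg n)
        linarith
      have hnpos : (0 : ℝ) < (n : ℝ) := by exact_mod_cast hn1
      have hndpos : (0 : ℝ) < (n : ℝ) * δ := by positivity
      calc ‖g z‖ / ‖1 + (n : ℂ) * w z‖ ≤ M' / ((n : ℝ) * δ) :=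
          div_le_div₀ hM'nonneg (hM'g z hz) hndpos hDlow
      _ = M' / δ * (1 / (n : ℝ)) := by rw [mul_one_div, div_div, mul_comm]
      _ < ε := hn
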